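/- Let q_n denote the number of independent dominating sets of the para-chain square cactus Q_n. For every n ≥ 1, the number of independent dominating sets of Q_{n+1} that contain the end cut vertex x_{n+1} equals q_n. -/
import Mathlib


/-- `S` is an independent dominating set of `G`: pairwise non-adjacent, and every
vertex outside `S` has a neighbour in `S`. -/
def IsIndepDomSet {V : Type*} (G : SimpleGraph V) (S : Finset V) : Prop :=
  (∀ v ∈ S, ∀ w ∈ S, ¬ G.Adj v w) ∧ ∀ v, v ∉ S → ∃ w ∈ S, G.Adj v w

/-- The para-chain square cactus `Q n`: `Sum.inl i` is the cut vertex `x i`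
(`0 ≤ i ≤ n`), `Sum.inr (Sum.inl k)` is `u (k+1)` and `Sum.inr (Sum.inr k)` is
`w (k+1)` (`0 ≤ k ≤ n-1`); the `i`-th square (`1 ≤ i ≤ n`) is the four-cycle
`x (i-1) – u i – x i – w i – x (i-1)`. -/
def paraSq (n : ℕ) : SimpleGraph (Fin (n + 1) ⊕ (Fin n ⊕ Fin n)) :=
  SimpleGraph.fromRel fun p q =>
    match p, q with
    | Sum.inl i, Sum.inr (Sum.inl k) => (i : ℕ) = (k : ℕ) ∨ (i : ℕ) = (k : ℕ) + 1
    | Sum.inl i, Sum.inr (Sum.inr k) => (i : ℕ) = (k : ℕ) ∨ (i : ℕ) = (k : ℕ) + 1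
    | _, _ => False

/-- The number of independent dominating sets of the para-chain square cactus `Q n`. -/
noncomputable def numIDSParaSq (n : ℕ) : ℕ :=
  Nat.card {S : Finset (Fin (n + 1) ⊕ (Fin n ⊕ Fin n)) // IsIndepDomSet (paraSq n) S}

def emb (n : ℕ) : (Fin (n+1) ⊕ (Fin n ⊕ Fin n)) ↪ (Fin (n+2) ⊕ (Fin (n+1) ⊕ Fin (n+1))) :=
  Fin.castSuccEmb.sumMap (Fin.castSuccEmb.sumMap Fin.castSuccEmb)

lemma emb_adj (n : ℕ) (p q : Fin (n+1) ⊕ (Fin n ⊕ Fin n)) :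
    (paraSq (n+1)).Adj (emb n p) (emb n q) ↔ (paraSq n).Adj p q := by
  rcases p with i | (k | k) <;> rcases q with j | (l | l) <;>
    simp [paraSq, SimpleGraph.fromRel_adj, emb, Fin.castSuccEmb, Fin.ext_iff]

lemma adj_last (n : ℕ) (q : Fin (n+2) ⊕ (Fin (n+1) ⊕ Fin (n+1))) :
    (paraSq (n+1)).Adj (Sum.inl (Fin.last (n+1))) q ↔
      q = Sum.inr (Sum.inl (Fin.last n)) ∨ q = Sum.inr (Sum.inr (Fin.last n)) := by
  rcases q with j | (l | l) <;>
    simp [paraSq, SimpleGraph.fromRel_adj, Fin.ext_iff, Fin.last] <;> omega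

lemma emb_ne (n : ℕ) (p : Fin (n+1) ⊕ (Fin n ⊕ Fin n)) :
    emb n p ≠ Sum.inl (Fin.last (n+1)) ∧ emb n p ≠ Sum.inr (Sum.inl (Fin.last n)) ∧
      emb n p ≠ Sum.inr (Sum.inr (Fin.last n)) := by
  rcases p with i | (k | k) <;>
    simp [emb, Fin.castSuccEmb, Fin.ext_iff, Fin.last] <;> omega

lemma emb_surj (n : ℕ) (v : Fin (n+2) ⊕ (Fin (n+1) ⊕ Fin (n+1))) :
    v = Sum.inl (Fin.last (n+1)) ∨ v = Sum.inr (Sum.inl (Fin.last n)) ∨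
      v = Sum.inr (Sum.inr (Fin.last n)) ∨ ∃ p, emb n p = v := by
  rcases v with j | (l | l)
  · rcases Fin.eq_castSucc_or_eq_last j with ⟨i, rfl⟩ | rfl
    · exact Or.inr <| Or.inr <| Or.inr ⟨Sum.inl i, rfl⟩
    · exact Or.inl rfl
  · rcases Fin.eq_castSucc_or_eq_last l with ⟨k, rfl⟩ | rfl
    · exact Or.inr <| Or.inr <| Or.inr ⟨Sum.inr (Sum.inl k), rfl⟩
    · exact Or.inr (Or.inl rfl)
  · rcases Fin.eq_castSucc_or_eq_last l with ⟨k, rfl⟩ | rfl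
    · exact Or.inr <| Or.inr <| Or.inr ⟨Sum.inr (Sum.inr k), rfl⟩
    · exact Or.inr <| Or.inr <| Or.inl rfl

lemma ids_insert (n : ℕ) (S : Finset (Fin (n+1) ⊕ (Fin n ⊕ Fin n)))
    (hS : IsIndepDomSet (paraSq n) S) :
    IsIndepDomSet (paraSq (n+1)) (insert (Sum.inl (Fin.last (n+1))) (S.map (emb n))) := by
  constructor
  · intro v hv w hw hadj
    rcases Finset.mem_insert.mp hv with rfl | hv
    · rcases Finset.mem_insert.mp hw with rfl | hw
      · exact (paraSq (n+1)).irrefl hadj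
      · obtain ⟨q, hq, rfl⟩ := Finset.mem_map.mp hw
        rcases (adj_last n _).mp hadj with h | h
        · exact (emb_ne n q).2.1 h
        · exact (emb_ne n q).2.2 h
    · obtain ⟨p, hp, rfl⟩ := Finset.mem_map.mp hv
      rcases Finset.mem_insert.mp hw with rfl | hw
      · rcases (adj_last n _).mp hadj.symm with h | h
        · exact (emb_ne n p).2.1 h
        · exact (emb_ne n p).2.2 h
      · obtain ⟨q, hq, rfl⟩ := Finset.mem_map.mp hw
        exact hS.1 p hp q hq ((emb_adj n p q).mp hadj)
  · intro v hv
    have hvlast : v ≠ Sum.inl (Fin.last (n+1)) := by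
      rintro rfl; exact hv (Finset.mem_insert_self _ _)
    rcases emb_surj n v with rfl | rfl | rfl | ⟨p, rfl⟩
    · exact absurd rfl hvlast
    · exact ⟨Sum.inl (Fin.last (n+1)), Finset.mem_insert_self _ _,
        ((adj_last n _).mpr (Or.inl rfl)).symm⟩
    · exact ⟨Sum.inl (Fin.last (n+1)), Finset.mem_insert_self _ _,
        ((adj_last n _).mpr (Or.inr rfl)).symm⟩
    · have hp : p ∉ S := fun h =>
        hv (Finset.mem_insert_of_mem (Finset.mem_map_of_mem _ h))
      obtain ⟨w, hw, hadj⟩ := hS.2 p hp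
      exact ⟨emb n w, Finset.mem_insert_of_mem (Finset.mem_map_of_mem _ hw),
        (emb_adj n p w).mpr hadj⟩

lemma ids_preimage (n : ℕ) (S : Finset (Fin (n+2) ⊕ (Fin (n+1) ⊕ Fin (n+1))))
    (hS : IsIndepDomSet (paraSq (n+1)) S) (hx : Sum.inl (Fin.last (n+1)) ∈ S) :
    IsIndepDomSet (paraSq n) (S.preimage (emb n) ((emb n).injective.injOn)) := by
  constructor
  · intro p hp q hq hadj
    exact hS.1 _ (Finset.mem_preimage.mp hp) _ (Finset.mem_preimage.mp hq)
      ((emb_adj n p q).mpr hadj)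
  · intro p hp
    have hp' : emb n p ∉ S := fun h => hp (Finset.mem_preimage.mpr h)
    obtain ⟨w, hwS, hadj⟩ := hS.2 (emb n p) hp'
    rcases emb_surj n w with rfl | rfl | rfl | ⟨q, rfl⟩
    · rcases (adj_last n _).mp hadj.symm with h | h
      · exact absurd h (emb_ne n p).2.1
      · exact absurd h (emb_ne n p).2.2
    · exact absurd (((adj_last n _).mpr (Or.inl rfl)).symm) (hS.1 _ hwS _ hx)
    · exact absurd (((adj_last n _).mpr (Or.inr rfl)).symm) (hS.1 _ hwS _ hx)
    · exact ⟨q, Finset.mem_preimage.mpr hwS, (emb_adj n p q).mp hadj⟩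


/-- For every `n ≥ 1`, the number of independent dominating sets of `Q (n+1)` that
contain the end cut vertex `x (n+1)` equals `q n`. -/
theorem numIDSParaSq_containing_end (n : ℕ) (hn : 1 ≤ n) :
    Nat.card {S : Finset (Fin (n + 2) ⊕ (Fin (n + 1) ⊕ Fin (n + 1))) //
        IsIndepDomSet (paraSq (n + 1)) S ∧ Sum.inl (Fin.last (n + 1)) ∈ S} =
      numIDSParaSq n := by
  apply Nat.card_congr
  refine
    { toFun := fun S => ⟨S.1.preimage (emb n) ((emb n).injective.injOn),
        ids_preimage n S.1 S.2.1 S.2.2⟩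
      invFun := fun T => ⟨insert (Sum.inl (Fin.last (n+1))) (T.1.map (emb n)),
        ids_insert n T.1 T.2, Finset.mem_insert_self _ _⟩
      left_inv := ?_, right_inv := ?_ }
  · rintro ⟨S, hS, hx⟩
    ext v
    simp only [Finset.mem_insert, Finset.mem_map, Finset.mem_preimage]
    constructor
    · rintro (rfl | ⟨p, hp, rfl⟩)
      · exact hx
      · exact hp
    · intro hv
      rcases emb_surj n v with rfl | rfl | rfl | ⟨p, rfl⟩
      · exact Or.inl rfl
      · exact absurd (((adj_last n _).mpr (Or.inl rfl)).symm) (hS.1 _ hv _ hx)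
      · exact absurd (((adj_last n _).mpr (Or.inr rfl)).symm) (hS.1 _ hv _ hx)
      · exact Or.inr ⟨p, hv, rfl⟩
  · rintro ⟨T, hT⟩
    ext p
    simp only [Finset.mem_preimage, Finset.mem_insert, Finset.mem_map]
    constructor
    · rintro (h | ⟨q, hq, h⟩)
      · exact absurd h (emb_ne n p).1
      · rwa [(emb n).injective h] at hq
    · intro hp
      exact Or.inr ⟨p, hp, rfl⟩
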